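/- The estimated cost E(p,u) = (1-p) * Σ_{j=0}^{k-1} p^j (Σ_{i≤j} u i) + p^k (Σ_{i≤k} u i) is monotonically nondecreasing in p on [0,1], when all costs u i ≥ 0. -/

import Mathlib

open Finset

noncomputable def estCost (k : ℕ) (p : ℝ) (u : Fin (k+1) → ℝ) : ℝ :=
  (1 - p) * ∑ j ∈ Finset.range k, p ^ j *
      ∑ i ∈ Finset.univ.filter (fun i : Fin (k+1) => (i : ℕ) ≤ j), u i
  + p ^ k * ∑ i, u i

lemma telescope (p : ℝ) : ∀ (k : ℕ) (v : ℕ → ℝ),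
    (1 - p) * ∑ j ∈ Finset.range k, p ^ j * ∑ i ∈ Finset.range (j+1), v i
      + p ^ k * ∑ i ∈ Finset.range (k+1), v i
    = ∑ j ∈ Finset.range (k+1), p ^ j * v j := by
  intro k
  induction k with
  | zero => intro v; simp
  | succ k ih =>
    intro v
    rw [Finset.sum_range_succ (fun j => p ^ j * ∑ i ∈ Finset.range (j+1), v i),
      Finset.sum_range_succ v (k+1),
      Finset.sum_range_succ (fun j => p ^ j * v j) (k+1), ← ih v]
    ring

lemma estCost_eq (k : ℕ) (p : ℝ) (u : Fin (k+1) → ℝ) :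
    estCost k p u = ∑ j ∈ Finset.range (k+1),
      p ^ j * (if h : j < k+1 then u ⟨j, h⟩ else 0) := by
  set v : ℕ → ℝ := fun i => if h : i < k+1 then u ⟨i, h⟩ else 0 with hv
  rw [← telescope p k v]
  unfold estCost
  have h1 : ∀ j : ℕ,
      ∑ i ∈ Finset.univ.filter (fun i : Fin (k+1) => (i : ℕ) ≤ j), u i
        = ∑ i ∈ Finset.range (min (j+1) (k+1)), v i := by
    intro j
    calc ∑ i ∈ Finset.univ.filter (fun i : Fin (k+1) => (i : ℕ) ≤ j), u i
        = ∑ a : Fin (k+1), if (a : ℕ) ≤ j then v a else 0 := by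
          rw [Finset.sum_filter]
          apply Finset.sum_congr rfl
          intro a _
          simp [hv, a.is_lt, a.is_le]
      _ = ∑ i ∈ Finset.range (k+1), if i ≤ j then v i else 0 :=
          Fin.sum_univ_eq_sum_range (fun i => if i ≤ j then v i else 0) (k+1)
      _ = ∑ i ∈ Finset.range (min (j+1) (k+1)), v i := by
          rw [← Finset.sum_filter]
          congr 1
          ext i
          simp only [Finset.mem_filter, Finset.mem_range, Nat.lt_min]
          omega
  have h2 : ∑ i, u i = ∑ i ∈ Finset.range (k+1), v i := by
    calc ∑ i, u i = ∑ a : Fin (k+1), v a := by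
          apply Finset.sum_congr rfl
          intro a _
          simp [hv, a.is_lt, a.is_le]
      _ = ∑ i ∈ Finset.range (k+1), v i := Fin.sum_univ_eq_sum_range v (k+1)
  rw [h2]
  congr 1
  congr 1
  apply Finset.sum_congr rfl
  intro j hj
  have hjk := Finset.mem_range.1 hj
  rw [h1 j, min_eq_left (by omega : j + 1 ≤ k + 1)]

theorem stmt2 (k : ℕ) (u : Fin (k+1) → ℝ) (hu : ∀ i, 0 ≤ u i) :
    MonotoneOn (fun p => estCost k p u) (Set.Icc (0:ℝ) 1) := by
  intro p hp q hq hpq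
  simp only [estCost_eq]
  apply Finset.sum_le_sum
  intro j hj
  apply mul_le_mul_of_nonneg_right (pow_le_pow_left₀ hp.1 hpq j)
  split
  · exact hu _
  · exact le_refl 0
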